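/- Define F : ℝ² → ℝ² by F(x₁, x₂) = (x₂, −x₁ − |x₁ − 1|/2 + |x₁ + 1|/2), and define V : ℝ → ℝ by V(x) = (1+x)²/2 for x ≤ −1, V(x) = 0 for −1 < x < 1, and V(x) = (1−x)²/2 for x ≥ 1. Let h be a real number and suppose (x̂₁, x̂₂), (x̌₁, x̌₂) ∈ ℝ² satisfy the generalized trapezoidal step relation (x̂₁, x̂₂) − (x̌₁, x̌₂) = h·∫₀¹ F((1−s)·(x̌₁, x̌₂) + s·(x̂₁, x̂₂)) ds. Then V(x̂₁) + x̂₂²/2 = V(x̌₁) + x̌₂²/2, i.e. the step preserves the total energy exactly. -/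

import Mathlib

open Set intervalIntegral MeasureTheory

-- derivative of t ↦ (max t 0)^2/2 is max t 0
lemma aux_q2 (t : ℝ) : HasDerivAt (fun t : ℝ => max t 0 ^ 2 / 2) (max t 0) t := by
  rcases lt_trichotomy t 0 with ht | ht | ht
  · have h0 : (fun t : ℝ => max t 0 ^ 2 / 2) =ᶠ[nhds t] fun _ => (0:ℝ) := by
      filter_upwards [eventually_lt_nhds ht] with y hy
      simp [max_eq_right hy.le]
    have : HasDerivAt (fun _ : ℝ => (0:ℝ)) 0 t := hasDerivAt_const t 0
    simpa [max_eq_right ht.le] using this.congr_of_eventuallyEq h0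
  · subst ht
    rw [hasDerivAt_iff_isLittleO]
    rw [Asymptotics.isLittleO_iff]
    intro ε hε
    filter_upwards [Metric.ball_mem_nhds (0:ℝ) hε] with y hy
    simp only [Metric.mem_ball, Real.dist_eq, sub_zero] at hy
    have h1 : max y 0 ≤ |y| := by
      rcases le_total y 0 with h | h
      · simp [max_eq_right h, abs_nonneg]
      · simp [max_eq_left h, le_abs_self]
    have h2 : (0:ℝ) ≤ max y 0 := le_max_right _ _
    simp only [max_self, sub_zero, zero_pow, smul_zero, Real.norm_eq_abs]
    rw [show ((0:ℝ) ^ 2 / 2) = 0 by norm_num, sub_zero]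
    rw [abs_of_nonneg (show (0:ℝ) ≤ (y ⊔ 0) ^ 2 / 2 from
      div_nonneg (pow_two_nonneg _) (by norm_num))]
    nlinarith [abs_nonneg y]
  · have h0 : (fun t : ℝ => max t 0 ^ 2 / 2) =ᶠ[nhds t] fun y => y ^ 2 / 2 := by
      filter_upwards [eventually_gt_nhds ht] with y hy
      simp [max_eq_left hy.le]
    have : HasDerivAt (fun y : ℝ => y ^ 2 / 2) t t := by
      simpa using ((hasDerivAt_pow 2 t).div_const 2)
    simpa [max_eq_left ht.le] using this.congr_of_eventuallyEq h0

lemma aux_Vd (V : ℝ → ℝ)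
    (hV₁ : ∀ x : ℝ, x ≤ -1 → V x = (1 + x) ^ 2 / 2)
    (hV₂ : ∀ x : ℝ, -1 < x → x < 1 → V x = 0)
    (hV₃ : ∀ x : ℝ, 1 ≤ x → V x = (1 - x) ^ 2 / 2) (x : ℝ) :
    HasDerivAt V (x + |x - 1| / 2 - |x + 1| / 2) x := by
  have hVW : V = fun x : ℝ => max (x - 1) 0 ^ 2 / 2 + max (-1 - x) 0 ^ 2 / 2 := by
    funext y
    rcases le_or_gt y (-1) with hy | hy
    · rw [hV₁ y hy, max_eq_right (by linarith : y - 1 ≤ 0),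
        max_eq_left (by linarith : (0:ℝ) ≤ -1 - y)]
      ring
    · rcases lt_or_ge y 1 with hy2 | hy2
      · rw [hV₂ y hy hy2, max_eq_right (by linarith : y - 1 ≤ 0),
          max_eq_right (by linarith : -1 - y ≤ 0)]
        norm_num
      · rw [hV₃ y hy2, max_eq_left (by linarith : (0:ℝ) ≤ y - 1),
          max_eq_right (by linarith : -1 - y ≤ 0)]
        ring
  rw [hVW]
  have h1 : HasDerivAt (fun x : ℝ => max (x - 1) 0 ^ 2 / 2) (max (x - 1) 0) x := by
    have := (aux_q2 (x - 1)).comp x ((hasDerivAt_id x).sub_const 1)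
    simpa [Function.comp_def] using this
  have h2 : HasDerivAt (fun x : ℝ => max (-1 - x) 0 ^ 2 / 2) (-(max (-1 - x) 0)) x := by
    have := (aux_q2 (-1 - x)).comp x ((hasDerivAt_id x).const_sub (-1))
    simpa [Function.comp_def] using this
  have h3 := h1.add h2
  refine h3.congr_deriv ?_
  have e1 : |x - 1| = max (x-1) 0 + max (1-x) 0 := by
    rcases le_total (x-1) 0 with hx | hx
    · rw [abs_of_nonpos hx, max_eq_right hx, max_eq_left (by linarith)]; ring
    · rw [abs_of_nonneg hx, max_eq_left hx, max_eq_right (by linarith)]; ring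
  have e2 : |x + 1| = max (x+1) 0 + max (-1-x) 0 := by
    rcases le_total (x+1) 0 with hx | hx
    · rw [abs_of_nonpos hx, max_eq_right hx, max_eq_left (by linarith)]; ring
    · rw [abs_of_nonneg hx, max_eq_left hx, max_eq_right (by linarith)]; ring
  have key : ∀ a : ℝ, max a 0 - max (-a) 0 = a := by
    intro a
    rcases le_total a 0 with ha | ha
    · rw [max_eq_right ha, max_eq_left (neg_nonneg.2 ha)]; ring
    · rw [max_eq_left ha, max_eq_right (neg_nonpos.2 ha)]; ring
  have e3 := key (x - 1)
  have e4 := key (x + 1)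
  rw [show -(x-1) = 1 - x by ring] at e3
  rw [show -(x+1) = -1 - x by ring] at e4
  rw [e1, e2]
  linarith [e3, e4]

theorem stmt_6 (F : ℝ × ℝ → ℝ × ℝ)
    (hF : ∀ x : ℝ × ℝ, F x = (x.2, -x.1 - |x.1 - 1| / 2 + |x.1 + 1| / 2))
    (V : ℝ → ℝ)
    (hV₁ : ∀ x : ℝ, x ≤ -1 → V x = (1 + x) ^ 2 / 2)
    (hV₂ : ∀ x : ℝ, -1 < x → x < 1 → V x = 0)
    (hV₃ : ∀ x : ℝ, 1 ≤ x → V x = (1 - x) ^ 2 / 2)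
    (h : ℝ) (xc xh : ℝ × ℝ)
    (hstep : xh - xc = h • ∫ s in (0 : ℝ)..1, F ((1 - s) • xc + s • xh)) :
    V xh.1 + xh.2 ^ 2 / 2 = V xc.1 + xc.2 ^ 2 / 2 := by
  obtain ⟨a, p⟩ := xc
  obtain ⟨b, q⟩ := xh
  simp only
  set g : ℝ → ℝ := fun s =>
    -((1 - s) * a + s * b) - |(1 - s) * a + s * b - 1| / 2 + |(1 - s) * a + s * b + 1| / 2
    with hg_def
  have hgc : Continuous g := by
    apply Continuous.add
    · apply Continuous.sub
      · continuity
      · exact (((continuous_const.sub continuous_id).mul continuous_const).add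
          (continuous_id.mul continuous_const)).sub continuous_const |>.abs.div_const 2
    · exact (((continuous_const.sub continuous_id).mul continuous_const).add
        (continuous_id.mul continuous_const)).add continuous_const |>.abs.div_const 2
  have hfc : Continuous (fun s : ℝ => (1 - s) * p + s * q) := by continuity
  have hfe : ∀ s : ℝ, F ((1 - s) • ((a, p) : ℝ × ℝ) + s • ((b, q) : ℝ × ℝ))
      = (((1 - s) * p + s * q), g s) := by
    intro s
    rw [hF]
    simp [Prod.smul_mk, smul_eq_mul, hg_def]
  have hint : (∫ s in (0:ℝ)..1, F ((1 - s) • ((a, p) : ℝ × ℝ) + s • ((b, q) : ℝ × ℝ)))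
      = ((∫ s in (0:ℝ)..1, ((1 - s) * p + s * q)), ∫ s in (0:ℝ)..1, g s) := by
    rw [intervalIntegral.integral_congr (fun s _ => hfe s)]
    rw [intervalIntegral.integral_of_le zero_le_one,
      integral_pair (hfc.integrableOn_Ioc) (hgc.integrableOn_Ioc),
      ← intervalIntegral.integral_of_le zero_le_one,
      ← intervalIntegral.integral_of_le zero_le_one]
  rw [hint] at hstep
  have e1 : b - a = h * ∫ s in (0:ℝ)..1, ((1 - s) * p + s * q) := by
    have := congrArg Prod.fst hstep
    simpa using this
  have e2 : q - p = h * ∫ s in (0:ℝ)..1, g s := by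
    have := congrArg Prod.snd hstep
    simpa using this
  have hI1 : (∫ s in (0:ℝ)..1, ((1 - s) * p + s * q)) = (p + q) / 2 := by
    have hd : ∀ s ∈ uIcc (0:ℝ) 1,
        HasDerivAt (fun s : ℝ => p * s + (q - p) * s ^ 2 / 2) ((1 - s) * p + s * q) s := by
      intro s _
      have := (((hasDerivAt_id s).const_mul p).add
        (((hasDerivAt_pow 2 s).const_mul (q - p)).div_const 2))
      refine this.congr_deriv ?_
      ring
    rw [intervalIntegral.integral_eq_sub_of_hasDerivAt hd (hfc.intervalIntegrable 0 1)]
    norm_num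
    ring
  have hVd := fun x => aux_Vd V hV₁ hV₂ hV₃ x
  have hc : ∀ s : ℝ, HasDerivAt (fun s : ℝ => (1 - s) * a + s * b) (b - a) s := by
    intro s
    have := (((hasDerivAt_id s).const_sub 1).mul_const a).add ((hasDerivAt_id s).mul_const b)
    refine this.congr_deriv ?_
    ring
  have hd2 : ∀ s ∈ uIcc (0:ℝ) 1,
      HasDerivAt (fun s : ℝ => -(V ((1 - s) * a + s * b))) ((b - a) * g s) s := by
    intro s _
    have := ((hVd ((1 - s) * a + s * b)).comp s (hc s)).neg
    refine this.congr_deriv ?_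
    simp only [hg_def]
    ring
  have key : (b - a) * ∫ s in (0:ℝ)..1, g s = V a - V b := by
    have hfc2 : Continuous (fun s : ℝ => (b - a) * g s) := continuous_const.mul hgc
    have := intervalIntegral.integral_eq_sub_of_hasDerivAt hd2 (hfc2.intervalIntegrable 0 1)
    rw [intervalIntegral.integral_const_mul] at this
    rw [this]
    norm_num
    ring
  rw [hI1] at e1
  set I := ∫ s in (0:ℝ)..1, g s
  linear_combination key + ((q + p) / 2) * e2 - I * e1
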